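/- Let E, F be Banach spaces, g : F → E continuously Fréchet differentiable in a neighborhood of x ∈ F, and f : E → R Lipschitz on a neighborhood of g(x). Then the Clarke subdifferential of the composition satisfies the chain-rule inclusion ∂_C(f ∘ g)(x) ⊆ (d_x g)*[∂_C f(g(x))], i.e. every ζ ∈ ∂_C(f∘g)(x) is of the form (d_x g)* ξ for some ξ ∈ ∂_C f(g(x)). -/

import Mathlib

/- Chain rule for the Clarke subdifferential: if `g : F → E` is continuously Fréchet
differentiable near `x` and `f : E → ℝ` is Lipschitz near `g x`, then
`∂_C (f ∘ g)(x) ⊆ (d_x g)*[∂_C f (g x)]`. -/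

open Filter Topology Metric Set

variable {E F : Type*} [NormedAddCommGroup E] [NormedSpace ℝ E]
  [NormedAddCommGroup F] [NormedSpace ℝ F]

/-- The Clarke directional derivative
`f°(x;v) = limsup_{x̃→x, τ↓0} (f(x̃+τv) − f(x̃))/τ`. -/
noncomputable def clarkeDeriv (f : E → ℝ) (x v : E) : ℝ :=
  Filter.limsup (fun p : E × ℝ => (f (p.1 + p.2 • v) - f p.1) / p.2)
    ((𝓝 x) ×ˢ (𝓝[>] (0 : ℝ)))

/-- The Clarke subdifferential `∂_C f(x) = {ξ ∈ E* : ⟨ξ,v⟩ ≤ f°(x;v) ∀ v}`. -/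
def clarkeSubdiff (f : E → ℝ) (x : E) : Set (E →L[ℝ] ℝ) :=
  {ξ | ∀ v : E, ξ v ≤ clarkeDeriv f x v}

private lemma clarke_bound {f : E → ℝ} {K : NNReal} {V : Set E} {y : E}
    (hV : V ∈ 𝓝 y) (hf : LipschitzOnWith K f V) (v : E) :
    ∀ᶠ p in (𝓝 y) ×ˢ (𝓝[>] (0:ℝ)),
      |(f (p.1 + p.2 • v) - f p.1) / p.2| ≤ K * ‖v‖ := by
  obtain ⟨r, hr, hball⟩ := Metric.mem_nhds_iff.1 hV
  have h1 : Metric.ball y (r/2) ∈ 𝓝 y := ball_mem_nhds _ (by positivity)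
  have h2 : Set.Ioo (0:ℝ) (r/(2*(‖v‖+1))) ∈ 𝓝[>] (0:ℝ) :=
    Ioo_mem_nhdsGT_of_mem ⟨le_refl _, by positivity⟩
  filter_upwards [prod_mem_prod h1 h2] with p hp
  obtain ⟨ha, hτ⟩ := hp
  have hτ0 : (0:ℝ) < p.2 := hτ.1
  have hv1 : (0:ℝ) < ‖v‖ + 1 := by positivity
  have hτv : p.2 * ‖v‖ < r/2 := by
    calc p.2 * ‖v‖ ≤ p.2 * (‖v‖+1) := by nlinarith [norm_nonneg v]
    _ < (r/(2*(‖v‖+1))) * (‖v‖+1) := by nlinarith [hτ.2]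
    _ = r/2 := by field_simp
  have hmem1 : p.1 ∈ V := by
    apply hball
    have := mem_ball.1 ha
    exact mem_ball.2 (by linarith)
  have hmem2 : p.1 + p.2 • v ∈ V := by
    apply hball
    rw [mem_ball, dist_eq_norm]
    have h3 : ‖p.1 + p.2 • v - y‖ ≤ ‖p.1 - y‖ + ‖p.2 • v‖ := by
      rw [show p.1 + p.2 • v - y = (p.1 - y) + p.2 • v by abel]; exact norm_add_le _ _
    have h4 : ‖p.2 • v‖ = p.2 * ‖v‖ := by
      rw [norm_smul, Real.norm_eq_abs, abs_of_pos hτ0]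
    have h5 : ‖p.1 - y‖ < r/2 := by rw [← dist_eq_norm]; exact mem_ball.1 ha
    linarith
  have hd : dist (f (p.1 + p.2 • v)) (f p.1) ≤ K * dist (p.1 + p.2 • v) p.1 :=
    (lipschitzOnWith_iff_dist_le_mul.1 hf) _ hmem2 _ hmem1
  rw [dist_eq_norm, dist_eq_norm] at hd
  have h6 : ‖p.1 + p.2 • v - p.1‖ = p.2 * ‖v‖ := by
    rw [add_sub_cancel_left, norm_smul, Real.norm_eq_abs, abs_of_pos hτ0]
  rw [abs_div, abs_of_pos hτ0, div_le_iff₀ hτ0]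
  calc |f (p.1 + p.2 • v) - f p.1| ≤ K * (p.2 * ‖v‖) := by
        rw [← h6]; exact_mod_cast hd
  _ = K * ‖v‖ * p.2 := by ring

private lemma limsup_comp_le_limsup {α β : Type*} {l : Filter α} {l' : Filter β} [l.NeBot]
    {m : α → β} (hm : Tendsto m l l') {u : β → ℝ} {c : ℝ}
    (hb : ∀ᶠ q in l', |u q| ≤ c) :
    limsup (fun a => u (m a)) l ≤ limsup u l' := by
  have hb' : ∀ᶠ a in l, |u (m a)| ≤ c := hm.eventually hb
  have h1 : limsup (fun a => u (m a)) l = limsup u (map m l) := by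
    rw [show Filter.limsup u (map m l) = limsSup (map u (map m l)) from rfl, map_map]; rfl
  rw [h1]
  haveI : (map m l).NeBot := Filter.map_neBot
  refine limsup_le_limsup_of_le hm ?_ ?_
  · exact (isBoundedUnder_of_eventually_ge (a := -c)
      (eventually_map.mpr (hb'.mono fun a h => (abs_le.1 h).1))).isCoboundedUnder_le
  · exact isBoundedUnder_of_eventually_le (hb.mono fun q h => (abs_le.1 h).2)

private lemma clarkeDeriv_le {f : E → ℝ} {K : NNReal} {V : Set E} {y : E}
    (hV : V ∈ 𝓝 y) (hf : LipschitzOnWith K f V) (v : E) :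
    clarkeDeriv f y v ≤ K * ‖v‖ := by
  have hb := clarke_bound hV hf v
  refine limsup_le_of_le ?_ (hb.mono fun p h => (abs_le.1 h).2)
  exact (isBoundedUnder_of_eventually_ge
    (hb.mono fun p h => (abs_le.1 h).1)).isCoboundedUnder_le

private lemma clarke_zero (f : E → ℝ) (y : E) : clarkeDeriv f y 0 = 0 := by
  unfold clarkeDeriv
  simp only [smul_zero, add_zero, sub_self, zero_div]
  exact limsup_const 0

private lemma clarke_subadd {f : E → ℝ} {K : NNReal} {V : Set E} {y : E}
    (hV : V ∈ 𝓝 y) (hf : LipschitzOnWith K f V) (v w : E) :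
    clarkeDeriv f y (v + w) ≤ clarkeDeriv f y v + clarkeDeriv f y w := by
  set L := (𝓝 y) ×ˢ (𝓝[>] (0:ℝ)) with hLdef
  haveI : L.NeBot := by rw [hLdef]; infer_instance
  set m : E × ℝ → E × ℝ := fun p => (p.1 + p.2 • w, p.2) with hmdef
  have htm : Tendsto m L L := by
    rw [hLdef]
    refine Tendsto.prodMk ?_ tendsto_snd
    have h0 : Tendsto (fun p : E × ℝ => p.1 + p.2 • w)
        ((𝓝 y) ×ˢ (𝓝[>] (0:ℝ))) (𝓝 (y + (0:ℝ) • w)) :=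
      tendsto_fst.add (((tendsto_snd.mono_right nhdsWithin_le_nhds)).smul_const w)
    simpa using h0
  set uv : E × ℝ → ℝ := fun q => (f (q.1 + q.2 • v) - f q.1) / q.2 with huv
  set uw : E × ℝ → ℝ := fun q => (f (q.1 + q.2 • w) - f q.1) / q.2 with huw
  have key : (fun p : E × ℝ => (f (p.1 + p.2 • (v + w)) - f p.1) / p.2)
      = (fun p => uv (m p)) + uw := by
    funext p
    show (f (p.1 + p.2 • (v + w)) - f p.1) / p.2
      = (f (p.1 + p.2 • w + p.2 • v) - f (p.1 + p.2 • w)) / p.2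
        + (f (p.1 + p.2 • w) - f p.1) / p.2
    rw [← add_div, sub_add_sub_cancel,
      show p.1 + p.2 • (v + w) = p.1 + p.2 • w + p.2 • v by rw [smul_add]; abel]
  have hbv : ∀ᶠ p in L, |uv (m p)| ≤ K * ‖v‖ := htm.eventually (clarke_bound hV hf v)
  have hbw : ∀ᶠ p in L, |uw p| ≤ K * ‖w‖ := clarke_bound hV hf w
  have hsum : clarkeDeriv f y (v + w) = limsup ((fun p => uv (m p)) + uw) L := by
    rw [clarkeDeriv, ← key, hLdef]
  rw [hsum]
  have h1 : limsup ((fun p => uv (m p)) + uw) L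
      ≤ limsup (fun p => uv (m p)) L + limsup uw L :=
    limsup_add_le
      (isBoundedUnder_of_eventually_ge (hbv.mono fun p h => (abs_le.1 h).1))
      (isBoundedUnder_of_eventually_le (hbv.mono fun p h => (abs_le.1 h).2))
      ((isBoundedUnder_of_eventually_ge
        (hbw.mono fun p h => (abs_le.1 h).1)).isCoboundedUnder_le)
      (isBoundedUnder_of_eventually_le (hbw.mono fun p h => (abs_le.1 h).2))
  refine h1.trans (add_le_add ?_ le_rfl)
  exact limsup_comp_le_limsup htm (clarke_bound hV hf v)

private lemma clarke_smul_le {f : E → ℝ} {K : NNReal} {V : Set E} {y : E}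
    (hV : V ∈ 𝓝 y) (hf : LipschitzOnWith K f V) {c : ℝ} (hc : 0 < c) (v : E) :
    clarkeDeriv f y (c • v) ≤ c * clarkeDeriv f y v := by
  set L := (𝓝 y) ×ˢ (𝓝[>] (0:ℝ)) with hLdef
  haveI : L.NeBot := by rw [hLdef]; infer_instance
  set u : E × ℝ → ℝ := fun q => (f (q.1 + q.2 • v) - f q.1) / q.2 with hudef
  set m : E × ℝ → E × ℝ := fun p => (p.1, c * p.2) with hmdef
  have hsnd : Tendsto (fun τ : ℝ => c * τ) (𝓝[>] (0:ℝ)) (𝓝[>] (0:ℝ)) := by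
    rw [tendsto_nhdsWithin_iff]
    constructor
    · have h0 : Tendsto (fun τ : ℝ => c * τ) (𝓝 (0:ℝ)) (𝓝 (c * 0)) :=
        (continuous_const.mul continuous_id).tendsto 0
      simpa using h0.mono_left nhdsWithin_le_nhds
    · exact eventually_nhdsWithin_of_forall fun τ hτ => mul_pos hc hτ
  have htm : Tendsto m L L := by
    rw [hLdef]; exact tendsto_fst.prodMk (hsnd.comp tendsto_snd)
  have key : (fun p : E × ℝ => (f (p.1 + p.2 • (c • v)) - f p.1) / p.2)
      = fun p => c * u (m p) := by
    funext p
    show (f (p.1 + p.2 • (c • v)) - f p.1) / p.2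
      = c * ((f (p.1 + (c * p.2) • v) - f p.1) / (c * p.2))
    rw [show p.2 • (c • v) = (c * p.2) • v by rw [smul_smul, mul_comm],
      mul_div_assoc', mul_div_mul_left _ _ hc.ne']
  have hb : ∀ᶠ p in L, |u (m p)| ≤ K * ‖v‖ := htm.eventually (clarke_bound hV hf v)
  have h2 : clarkeDeriv f y (c • v) = limsup (fun p => c * u (m p)) L := by
    rw [clarkeDeriv, hLdef, key]
  rw [h2]
  have h3 : limsup (fun p => c * u (m p)) L = c * limsup (fun p => u (m p)) L := by
    have hmono : Monotone (fun r : ℝ => c * r) :=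
      fun a b hab => mul_le_mul_of_nonneg_left hab hc.le
    exact (hmono.map_limsup_of_continuousAt (fun p => u (m p))
      ((continuous_const.mul continuous_id).continuousAt)
      (isBoundedUnder_of_eventually_le (hb.mono fun p h => (abs_le.1 h).2))
      ((isBoundedUnder_of_eventually_ge
        (hb.mono fun p h => (abs_le.1 h).1)).isCoboundedUnder_le)).symm
  rw [h3]
  exact mul_le_mul_of_nonneg_left
    (limsup_comp_le_limsup htm (clarke_bound hV hf v)) hc.le

private lemma clarke_smul {f : E → ℝ} {K : NNReal} {V : Set E} {y : E}
    (hV : V ∈ 𝓝 y) (hf : LipschitzOnWith K f V) {c : ℝ} (hc : 0 < c) (v : E) :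
    clarkeDeriv f y (c • v) = c * clarkeDeriv f y v := by
  refine le_antisymm (clarke_smul_le hV hf hc v) ?_
  have h := clarke_smul_le hV hf (inv_pos.2 hc) (c • v)
  rw [inv_smul_smul₀ hc.ne'] at h
  exact (mul_le_mul_of_nonneg_left h hc.le).trans_eq (mul_inv_cancel_left₀ hc.ne' _)

set_option maxHeartbeats 1000000 in
private lemma clarke_chain_ineq (g : F → E) (x : F) (g' : F → F →L[ℝ] E)
    (hg : ∀ᶠ y in 𝓝 x, HasFDerivAt g (g' y) y) (hg' : ContinuousAt g' x)
    (f : E → ℝ) (K : NNReal) (V : Set E) (hV : V ∈ 𝓝 (g x))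
    (hf : LipschitzOnWith K f V) (v : F) :
    clarkeDeriv (f ∘ g) x v ≤ clarkeDeriv f (g x) (g' x v) := by
  have hgc : ContinuousAt g x := (hg.self_of_nhds).differentiableAt.continuousAt
  set A : E := g' x v with hA
  set L : Filter (F × ℝ) := (𝓝 x) ×ˢ (𝓝[>] (0:ℝ)) with hLdef
  haveI : L.NeBot := by rw [hLdef]; infer_instance
  set mm : F × ℝ → E × ℝ := fun p => (g p.1, p.2) with hmm
  have hm : Tendsto mm L ((𝓝 (g x)) ×ˢ (𝓝[>] (0:ℝ))) := by
    rw [hLdef]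
    exact (hgc.tendsto.comp tendsto_fst).prodMk tendsto_snd
  set u₁ : F × ℝ → ℝ := fun p => ((f ∘ g) (p.1 + p.2 • v) - (f ∘ g) p.1) / p.2 with hu₁
  set ww : E × ℝ → ℝ := fun q => (f (q.1 + q.2 • A) - f q.1) / q.2 with hww
  set u₂ : F × ℝ → ℝ := fun p => ww (mm p) with hu₂
  have hbw : ∀ᶠ q in (𝓝 (g x)) ×ˢ (𝓝[>] (0:ℝ)), |ww q| ≤ K * ‖A‖ := clarke_bound hV hf A
  have hb₂ : ∀ᶠ p in L, |u₂ p| ≤ K * ‖A‖ := hm.eventually hbw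
  have key : ∀ ε : ℝ, 0 < ε → clarkeDeriv (f ∘ g) x v ≤ clarkeDeriv f (g x) A + ε := by
    intro ε hε
    set ε' : ℝ := ε / ((K + 1) * (‖v‖ + 1)) with hε'def
    have hε' : 0 < ε' := by positivity
    obtain ⟨r, hr, hrV⟩ := Metric.mem_nhds_iff.1 hV
    have hev : ∀ᶠ y in 𝓝 x, HasFDerivAt g (g' y) y ∧ ‖g' y - g' x‖ ≤ ε' := by
      filter_upwards [hg, Metric.tendsto_nhds.1 hg' ε' hε'] with y h1 h2
      exact ⟨h1, by rw [← dist_eq_norm]; exact h2.le⟩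
    obtain ⟨δ, hδ, hδball⟩ := Metric.eventually_nhds_iff_ball.1 hev
    -- mean value estimate
    have hmvt : ∀ a ∈ ball x (δ/2), ∀ τ : ℝ, 0 < τ → τ < δ/(2*(‖v‖+1)) →
        ‖g (a + τ • v) - g a - τ • A‖ ≤ ε' * (τ * ‖v‖) := by
      intro a ha τ hτ0 hτ
      have hv1 : (0:ℝ) < ‖v‖ + 1 := by positivity
      have hτv : τ * ‖v‖ < δ/2 := by
        calc τ * ‖v‖ ≤ τ * (‖v‖+1) := by nlinarith [norm_nonneg v]
        _ < (δ/(2*(‖v‖+1))) * (‖v‖+1) := by nlinarith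
        _ = δ/2 := by field_simp
      have h1 : a ∈ ball x δ := by
        have := mem_ball.1 ha; exact mem_ball.2 (by linarith)
      have h2 : a + τ • v ∈ ball x δ := by
        rw [mem_ball, dist_eq_norm]
        have h3 : ‖a + τ • v - x‖ ≤ ‖a - x‖ + ‖τ • v‖ := by
          rw [show a + τ • v - x = (a - x) + τ • v by abel]; exact norm_add_le _ _
        have h4 : ‖τ • v‖ = τ * ‖v‖ := by
          rw [norm_smul, Real.norm_eq_abs, abs_of_pos hτ0]
        have h5 : ‖a - x‖ < δ/2 := by rw [← dist_eq_norm]; exact mem_ball.1 ha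
        linarith
      have hmv := (convex_ball x δ).norm_image_sub_le_of_norm_hasFDerivWithin_le'
        (fun z hz => ((hδball z hz).1).hasFDerivWithinAt)
        (fun z hz => (hδball z hz).2) h1 h2
      rw [add_sub_cancel_left, map_smul, norm_smul, Real.norm_eq_abs,
        abs_of_pos hτ0] at hmv
      exact hmv
    -- arithmetic for the Lipschitz constant
    have hD : (0:ℝ) < ((K:ℝ) + 1) * (‖v‖ + 1) := by positivity
    have hKε : (K : ℝ) * (ε' * ‖v‖) ≤ ε := by
      have h1 : (K:ℝ) * ‖v‖ ≤ ((K:ℝ)+1) * (‖v‖+1) := by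
        nlinarith [norm_nonneg v, K.coe_nonneg]
      have h2 : (K:ℝ) * (ε' * ‖v‖) = ε * ((K:ℝ) * ‖v‖) / (((K:ℝ)+1) * (‖v‖+1)) := by
        rw [hε'def]; field_simp
      rw [h2, div_le_iff₀ hD]
      nlinarith [hε.le]
    set T : ℝ := min (δ/(2*(‖v‖+1))) (r/(4*(‖A‖ + ε'*‖v‖ + 1))) with hTdef
    have hT0 : 0 < T := by
      apply lt_min <;> positivity
    have hptwise : ∀ᶠ p in L, |u₁ p - u₂ p| ≤ ε := by
      rw [hLdef]
      have hn1 : ball x (δ/2) ∩ g ⁻¹' (ball (g x) (r/4)) ∈ 𝓝 x :=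
        inter_mem (ball_mem_nhds _ (by positivity))
          (hgc (ball_mem_nhds _ (by positivity)))
      have hn2 : Set.Ioo (0:ℝ) T ∈ 𝓝[>] (0:ℝ) :=
        Ioo_mem_nhdsGT_of_mem ⟨le_refl _, hT0⟩
      filter_upwards [prod_mem_prod hn1 hn2] with p hp
      obtain ⟨a, τ⟩ := p
      obtain ⟨⟨ha, hga⟩, hτ⟩ := hp
      simp only at ha hga hτ
      have hτ0 : (0:ℝ) < τ := hτ.1
      have hτδ : τ < δ/(2*(‖v‖+1)) := lt_of_lt_of_le hτ.2 (min_le_left _ _)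
      have hτr : τ < r/(4*(‖A‖ + ε'*‖v‖ + 1)) := lt_of_lt_of_le hτ.2 (min_le_right _ _)
      have hmv := hmvt a ha τ hτ0 hτδ
      have hP : (0:ℝ) < ‖A‖ + ε'*‖v‖ + 1 := by positivity
      have hτA : τ * (‖A‖ + ε'*‖v‖ + 1) < r/4 := by
        calc τ * (‖A‖ + ε'*‖v‖ + 1)
            < (r/(4*(‖A‖ + ε'*‖v‖ + 1))) * (‖A‖ + ε'*‖v‖ + 1) :=
              mul_lt_mul_of_pos_right hτr hP
        _ = r/4 := by field_simp
      have hgar : ‖g a - g x‖ < r/4 := by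
        rw [← dist_eq_norm]; exact mem_ball.1 hga
      have hτAle : τ * ‖A‖ ≤ τ * (‖A‖ + ε'*‖v‖ + 1) := by
        have h0 : (0:ℝ) ≤ τ * (ε'*‖v‖ + 1) :=
          mul_nonneg hτ0.le (by positivity)
        nlinarith
      have hb₁ : g a + τ • A ∈ V := by
        apply hrV
        rw [mem_ball, dist_eq_norm]
        have h3 : ‖g a + τ • A - g x‖ ≤ ‖g a - g x‖ + ‖τ • A‖ := by
          rw [show g a + τ • A - g x = (g a - g x) + τ • A by abel]; exact norm_add_le _ _
        have h4 : ‖τ • A‖ = τ * ‖A‖ := by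
          rw [norm_smul, Real.norm_eq_abs, abs_of_pos hτ0]
        linarith
      have hdiff : ‖g (a + τ • v) - (g a + τ • A)‖ ≤ ε' * (τ * ‖v‖) := by
        have heq2 : g (a + τ • v) - (g a + τ • A) = g (a + τ • v) - g a - τ • A := by abel
        rw [heq2]; exact hmv
      have hεth : ε' * (τ * ‖v‖) ≤ τ * (ε'*‖v‖ + 1) := by nlinarith [hτ0.le, hε'.le, norm_nonneg v]
      have hb₂' : g (a + τ • v) ∈ V := by
        apply hrV
        rw [mem_ball, dist_eq_norm]
        have h3 : ‖g (a + τ • v) - g x‖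
            ≤ ‖g (a + τ • v) - (g a + τ • A)‖ + ‖g a + τ • A - g x‖ := by
          rw [show g (a + τ • v) - g x = (g (a + τ • v) - (g a + τ • A)) + (g a + τ • A - g x) by abel]
          exact norm_add_le _ _
        have h4 : ‖g a + τ • A - g x‖ ≤ ‖g a - g x‖ + τ * ‖A‖ := by
          have h5 := norm_add_le (g a - g x) (τ • A)
          have h6 : ‖τ • A‖ = τ * ‖A‖ := by
            rw [norm_smul, Real.norm_eq_abs, abs_of_pos hτ0]
          calc ‖g a + τ • A - g x‖ = ‖(g a - g x) + τ • A‖ := by congr 1; abel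
          _ ≤ ‖g a - g x‖ + ‖τ • A‖ := h5
          _ = ‖g a - g x‖ + τ * ‖A‖ := by rw [h6]
        have h9 : τ * ‖A‖ + τ * (ε' * ‖v‖ + 1) ≤ τ * (‖A‖ + ε'*‖v‖ + 1) := by nlinarith [hτ0.le]
        linarith
      have hfd : |f (g (a + τ • v)) - f (g a + τ • A)| ≤ ε * τ := by
        have hd := (lipschitzOnWith_iff_dist_le_mul.1 hf) _ hb₂' _ hb₁
        rw [dist_eq_norm, dist_eq_norm] at hd
        have h11 : (K:ℝ) * ‖g (a + τ • v) - (g a + τ • A)‖ ≤ (K:ℝ) * (ε' * (τ * ‖v‖)) :=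
          mul_le_mul_of_nonneg_left hdiff K.coe_nonneg
        have h10 : (K:ℝ) * (ε' * (τ * ‖v‖)) = ((K:ℝ) * (ε' * ‖v‖)) * τ := by ring
        calc |f (g (a + τ • v)) - f (g a + τ • A)|
            ≤ (K:ℝ) * ‖g (a + τ • v) - (g a + τ • A)‖ := hd
        _ ≤ ((K:ℝ) * (ε' * ‖v‖)) * τ := by rw [← h10]; exact h11
        _ ≤ ε * τ := mul_le_mul_of_nonneg_right hKε hτ0.le
      have hsub : u₁ (a, τ) - u₂ (a, τ)
          = (f (g (a + τ • v)) - f (g a + τ • A)) / τ := by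
        simp only [hu₁, hu₂, hww, hmm, Function.comp_apply]
        rw [div_sub_div_same]
        congr 1
        abel
      rw [hsub, abs_div, abs_of_pos hτ0, div_le_iff₀ hτ0]
      exact hfd
    -- assemble limsup estimates
    have hub : ∀ᶠ p in L, u₁ p ≤ u₂ p + ε :=
      hptwise.mono fun p h => by linarith [(abs_le.1 h).2]
    have hlb : ∀ᶠ p in L, -((K:ℝ) * ‖A‖) - ε ≤ u₁ p := by
      filter_upwards [hptwise, hb₂] with p h1 h2
      have := (abs_le.1 h1).1
      have := (abs_le.1 h2).1
      linarith
    have hc1 : clarkeDeriv (f ∘ g) x v = limsup u₁ L := by rw [clarkeDeriv, hLdef]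
    rw [hc1]
    have step1 : limsup u₁ L ≤ limsup (fun p => u₂ p + ε) L := by
      refine limsup_le_limsup hub ?_ ?_
      · exact (isBoundedUnder_of_eventually_ge hlb).isCoboundedUnder_le
      · exact isBoundedUnder_of_eventually_le (a := (K:ℝ)*‖A‖ + ε)
          (hb₂.mono fun p h => by linarith [(abs_le.1 h).2])
    have step2 : limsup (fun p => u₂ p + ε) L = limsup u₂ L + ε :=
      limsup_add_const L u₂ ε
        (isBoundedUnder_of_eventually_le (hb₂.mono fun p h => (abs_le.1 h).2))
        ((isBoundedUnder_of_eventually_ge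
          (hb₂.mono fun p h => (abs_le.1 h).1)).isCoboundedUnder_le)
    have step3 : limsup u₂ L ≤ clarkeDeriv f (g x) A :=
      limsup_comp_le_limsup hm hbw
    calc limsup u₁ L ≤ limsup (fun p => u₂ p + ε) L := step1
    _ = limsup u₂ L + ε := step2
    _ ≤ clarkeDeriv f (g x) A + ε := by linarith
  by_contra hcon
  push_neg at hcon
  have := key ((clarkeDeriv (f ∘ g) x v - clarkeDeriv f (g x) A)/2) (by linarith)
  linarith

set_option maxHeartbeats 1000000 in
theorem clarke_chain_rule (g : F → E) (x : F) (g' : F → F →L[ℝ] E)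
    (hg : ∀ᶠ y in 𝓝 x, HasFDerivAt g (g' y) y) (hg' : ContinuousAt g' x)
    (f : E → ℝ) (K : NNReal) (V : Set E) (hV : V ∈ 𝓝 (g x))
    (hf : LipschitzOnWith K f V) :
    ∀ ζ ∈ clarkeSubdiff (f ∘ g) x,
      ∃ ξ ∈ clarkeSubdiff f (g x), ζ = ξ.comp (g' x) := by
  intro ζ hζ
  set Alin : F →ₗ[ℝ] E := (g' x : F →ₗ[ℝ] E) with hAlin
  set N : E → ℝ := clarkeDeriv f (g x) with hN
  have hchain : ∀ v : F, ζ v ≤ N (Alin v) := fun v =>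
    (hζ v).trans (clarke_chain_ineq g x g' hg hg' f K V hV hf v)
  -- kernel inclusion
  have hker : LinearMap.ker Alin ≤ LinearMap.ker (ζ : F →ₗ[ℝ] ℝ) := by
    intro v hv
    rw [LinearMap.mem_ker] at hv ⊢
    have h1 : ζ v ≤ 0 := by
      have := hchain v; rw [hv, hN, clarke_zero] at this; exact this
    have h2 : ζ (-v) ≤ 0 := by
      have h3 : Alin (-v) = 0 := by rw [map_neg, hv, neg_zero]
      have := hchain (-v); rw [h3, hN, clarke_zero] at this; exact this
    have h4 : (ζ : F →ₗ[ℝ] ℝ) (-v) = -(ζ v) := map_neg _ v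
    simp only [ContinuousLinearMap.coe_coe] at h4 ⊢
    rw [h4] at h2
    linarith
  -- the functional on the range of Alin
  set q : (F ⧸ LinearMap.ker Alin) →ₗ[ℝ] ℝ :=
    (LinearMap.ker Alin).liftQ (ζ : F →ₗ[ℝ] ℝ) hker with hq
  set e := Alin.quotKerEquivRange with he
  set ξ₀ : LinearMap.range Alin →ₗ[ℝ] ℝ := q ∘ₗ (e.symm : _ →ₗ[ℝ] _) with hξ₀def
  have hξ₀ : ∀ v : F, ξ₀ ⟨Alin v, LinearMap.mem_range_self _ v⟩ = ζ v := by
    intro v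
    show q (e.symm ⟨Alin v, LinearMap.mem_range_self _ v⟩) = ζ v
    rw [he, LinearMap.quotKerEquivRange_symm_apply_image]
    show q (Submodule.Quotient.mk v) = ζ v
    rw [hq, Submodule.liftQ_apply]
    rfl
  -- Hahn-Banach extension
  set pm : E →ₗ.[ℝ] ℝ := ⟨LinearMap.range Alin, ξ₀⟩ with hpm
  have hle : ∀ w : pm.domain, pm w ≤ N w := by
    rintro ⟨w, hw⟩
    obtain ⟨v, hv⟩ := hw
    have hmem : Alin v ∈ LinearMap.range Alin := LinearMap.mem_range_self _ v
    have hcast : (⟨w, ⟨v, hv⟩⟩ : pm.domain) = ⟨Alin v, hmem⟩ := by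
      apply Subtype.ext; exact hv.symm
    rw [hcast]
    show ξ₀ ⟨Alin v, hmem⟩ ≤ N (Alin v)
    rw [hξ₀ v]
    exact hchain v
  obtain ⟨ξlin, hext, hNle⟩ := exists_extension_of_le_sublinear pm N
    (fun c hc w => clarke_smul hV hf hc w)
    (fun w₁ w₂ => clarke_subadd hV hf w₁ w₂)
    hle
  -- continuity
  have hbound : ∀ w : E, ‖ξlin w‖ ≤ (K : ℝ) * ‖w‖ := by
    intro w
    rw [Real.norm_eq_abs, abs_le]
    constructor
    · have h1 : ξlin (-w) ≤ N (-w) := hNle (-w)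
      have h2 : N (-w) ≤ (K : ℝ) * ‖-w‖ := clarkeDeriv_le hV hf (-w)
      rw [norm_neg] at h2
      have h3 : ξlin (-w) = -(ξlin w) := map_neg _ w
      rw [h3] at h1
      linarith
    · exact (hNle w).trans (clarkeDeriv_le hV hf w)
  set ξ : E →L[ℝ] ℝ := ξlin.mkContinuous (K : ℝ) hbound with hξ
  refine ⟨ξ, ?_, ?_⟩
  · intro w
    show ξlin w ≤ clarkeDeriv f (g x) w
    exact hNle w
  · ext v
    show ζ v = ξ (g' x v)
    have h1 : ξ (g' x v) = ξlin (Alin v) := rfl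
    rw [h1]
    have h2 := hext ⟨Alin v, LinearMap.mem_range_self _ v⟩
    rw [h2]
    show _ = ξ₀ ⟨Alin v, _⟩
    rw [hξ₀ v]
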